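/- Let 2 ≤ p ≤ q be real numbers, and let x, y be nonnegative functions in L^p(μ) on a measure space (X, μ). Then ‖x+y‖_p^q + ‖x−y‖_p^q ≥ 2(‖x‖_p^q + ‖y‖_p^q). -/

import Mathlib

open MeasureTheory
open scoped ENNReal NNReal

lemma key_rpow {r : ℝ} (hr : 1 ≤ r) {a b c d : ℝ≥0∞} (h : 2 * (a + b) ≤ c + d) :
    2 * (a ^ r + b ^ r) ≤ c ^ r + d ^ r := by
  have hr0 : 0 ≤ r := by linarith
  have h2 : (2 : ℝ≥0∞) ≠ 0 := by norm_num
  have h2' : (2 : ℝ≥0∞) ≠ ⊤ := by norm_num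
  calc 2 * (a ^ r + b ^ r) ≤ 2 * (a + b) ^ r :=
        mul_le_mul_right (ENNReal.add_rpow_le_rpow_add a b hr) 2
    _ = (2 : ℝ≥0∞) ^ (1 - r) * ((2 : ℝ≥0∞) ^ r * (a + b) ^ r) := by
        rw [← mul_assoc, ← ENNReal.rpow_add _ _ h2 h2']
        norm_num
    _ = (2 : ℝ≥0∞) ^ (1 - r) * (2 * (a + b)) ^ r := by
        rw [ENNReal.mul_rpow_of_nonneg _ _ hr0]
    _ ≤ (2 : ℝ≥0∞) ^ (1 - r) * (c + d) ^ r :=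
        mul_le_mul_right (ENNReal.rpow_le_rpow h hr0) _
    _ ≤ (2 : ℝ≥0∞) ^ (1 - r) * ((2 : ℝ≥0∞) ^ (r - 1) * (c ^ r + d ^ r)) :=
        mul_le_mul_right (ENNReal.rpow_add_le_mul_rpow_add_rpow c d hr) _
    _ = c ^ r + d ^ r := by
        rw [← mul_assoc, ← ENNReal.rpow_add _ _ h2 h2']
        norm_num

lemma ptwise_clarkson {p : ℝ} (hp : 2 ≤ p) (u v : ℝ) :
    2 * ((‖u‖₊ : ℝ≥0∞) ^ p + (‖v‖₊ : ℝ≥0∞) ^ p) ≤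
      (‖u + v‖₊ : ℝ≥0∞) ^ p + (‖u - v‖₊ : ℝ≥0∞) ^ p := by
  have hsq : ∀ w : ℝ, (‖w‖₊ : ℝ≥0∞) ^ p = ((‖w‖₊ : ℝ≥0∞) ^ (2 : ℝ)) ^ (p / 2) := by
    intro w
    rw [← ENNReal.rpow_mul]
    congr 1
    ring
  have hof : ∀ w : ℝ, (‖w‖₊ : ℝ≥0∞) ^ (2 : ℝ) = ENNReal.ofReal (w ^ 2) := by
    intro w
    rw [← enorm_eq_nnnorm, ← ofReal_norm_eq_enorm,
      ENNReal.ofReal_rpow_of_nonneg (norm_nonneg w) (by norm_num : (0:ℝ) ≤ 2)]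
    congr 1
    rw [show (2 : ℝ) = ((2 : ℕ) : ℝ) by norm_num, Real.rpow_natCast]
    simp [Real.norm_eq_abs, sq_abs]
  have hpar : 2 * ((‖u‖₊ : ℝ≥0∞) ^ (2 : ℝ) + (‖v‖₊ : ℝ≥0∞) ^ (2 : ℝ)) ≤
      (‖u + v‖₊ : ℝ≥0∞) ^ (2 : ℝ) + (‖u - v‖₊ : ℝ≥0∞) ^ (2 : ℝ) := by
    rw [hof, hof, hof, hof, ← ENNReal.ofReal_add (sq_nonneg _) (sq_nonneg _),
      ← ENNReal.ofReal_add (sq_nonneg _) (sq_nonneg _),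
      show (2 : ℝ≥0∞) = ENNReal.ofReal 2 by norm_num,
      ← ENNReal.ofReal_mul (by norm_num)]
    apply le_of_eq
    congr 1
    ring
  rw [hsq u, hsq v, hsq (u + v), hsq (u - v)]
  exact key_rpow (by linarith) hpar

theorem stmt7 {X : Type*} [MeasurableSpace X] (μ : Measure X) (p q : ℝ)
    (hp : 2 ≤ p) (hpq : p ≤ q) (x y : X → ℝ)
    (hx : MemLp x (ENNReal.ofReal p) μ) (hy : MemLp y (ENNReal.ofReal p) μ)
    (hx0 : ∀ᵐ t ∂μ, 0 ≤ x t) (hy0 : ∀ᵐ t ∂μ, 0 ≤ y t) :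
    eLpNorm (x + y) (ENNReal.ofReal p) μ ^ q + eLpNorm (x - y) (ENNReal.ofReal p) μ ^ q ≥
      2 * (eLpNorm x (ENNReal.ofReal p) μ ^ q + eLpNorm y (ENNReal.ofReal p) μ ^ q) := by
  have hp0 : (0 : ℝ) < p := by linarith
  have hpne : ENNReal.ofReal p ≠ 0 := by
    simp [ENNReal.ofReal_eq_zero]; linarith
  have hptop : ENNReal.ofReal p ≠ ∞ := ENNReal.ofReal_ne_top
  have htr : (ENNReal.ofReal p).toReal = p := ENNReal.toReal_ofReal hp0.le
  -- lintegral comparison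
  set J : (X → ℝ) → ℝ≥0∞ := fun f => ∫⁻ a, (‖f a‖₊ : ℝ≥0∞) ^ p ∂μ with hJ
  have hmx : AEMeasurable (fun a => (‖x a‖₊ : ℝ≥0∞) ^ p) μ := hx.1.enorm.pow_const p
  have hmy : AEMeasurable (fun a => (‖y a‖₊ : ℝ≥0∞) ^ p) μ := hy.1.enorm.pow_const p
  have hmxy : AEMeasurable (fun a => (‖(x + y) a‖₊ : ℝ≥0∞) ^ p) μ :=
    (hx.1.add hy.1).enorm.pow_const p
  have hint : 2 * (J x + J y) ≤ J (x + y) + J (x - y) := by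
    have h1 : ∫⁻ a, 2 * ((‖x a‖₊ : ℝ≥0∞) ^ p + (‖y a‖₊ : ℝ≥0∞) ^ p) ∂μ ≤
        ∫⁻ a, ((‖(x + y) a‖₊ : ℝ≥0∞) ^ p + (‖(x - y) a‖₊ : ℝ≥0∞) ^ p) ∂μ := by
      refine lintegral_mono fun a => ?_
      simpa using ptwise_clarkson hp (x a) (y a)
    rw [lintegral_const_mul' _ _ (by norm_num), lintegral_add_left' hmx,
      lintegral_add_left' hmxy] at h1
    exact h1
  -- rewrite eLpNorm powers
  have hN : ∀ f : X → ℝ, eLpNorm f (ENNReal.ofReal p) μ ^ q = (J f) ^ (q / p) := by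
    intro f
    rw [eLpNorm_eq_lintegral_rpow_enorm_toReal hpne hptop]; simp only [enorm_eq_nnnorm]; rw [htr, ← ENNReal.rpow_mul, one_div,
      inv_mul_eq_div]
  rw [ge_iff_le, hN, hN, hN, hN]
  exact key_rpow ((one_le_div hp0).2 hpq) hint
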